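/- For every s > 2 there is a constant c_s > 0 such that for all d with s ≤ d ≤ (n−1)/2 and n sufficiently large, there exists an n-vertex graph G with average degree at least d in which every nonempty induced subgraph on at most c_s·n·d^{−s/(s−2)} vertices has average degree less than s. -/

import Mathlib

open Finset

lemma aux_pow3 : ∀ k : ℕ, (k:ℝ)^k ≤ 3^k * (k.factorial : ℝ) := by
  intro k
  induction k with
  | zero => simp
  | succ k ih =>
    rcases Nat.eq_zero_or_pos k with rfl | hk
    · norm_num
    have hk0 : (0:ℝ) < k := by exact_mod_cast hk
    have hstep : ((k:ℝ)+1)^k ≤ 3 * (k:ℝ)^k := by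
      have h1 : ((k:ℝ)+1) ≤ (k:ℝ) * Real.exp (1/k) := by
        have := Real.add_one_le_exp (1/k : ℝ)
        calc ((k:ℝ)+1) = (k:ℝ) * (1/k + 1) := by field_simp; ring
        _ ≤ (k:ℝ) * Real.exp (1/k) := by
            exact mul_le_mul_of_nonneg_left this hk0.le
      have h2 : ((k:ℝ)+1)^k ≤ ((k:ℝ) * Real.exp (1/k))^k :=
        pow_le_pow_left₀ (by positivity) h1 k
      have h3 : ((k:ℝ) * Real.exp (1/k))^k = (k:ℝ)^k * Real.exp 1 := by
        rw [mul_pow, ← Real.exp_nat_mul]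
        congr 2
        field_simp
      have h4 : Real.exp 1 ≤ 3 := by
        have := Real.exp_one_lt_d9
        linarith
      calc ((k:ℝ)+1)^k ≤ (k:ℝ)^k * Real.exp 1 := by rw [← h3]; exact h2
      _ ≤ (k:ℝ)^k * 3 := mul_le_mul_of_nonneg_left h4 (by positivity)
      _ = 3 * (k:ℝ)^k := by ring
    have : ((k:ℝ)+1)^(k+1) = ((k:ℝ)+1) * ((k:ℝ)+1)^k := by ring
    push_cast
    rw [this]
    calc ((k:ℝ)+1) * ((k:ℝ)+1)^k ≤ ((k:ℝ)+1) * (3 * (k:ℝ)^k) :=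
      mul_le_mul_of_nonneg_left hstep (by positivity)
    _ ≤ ((k:ℝ)+1) * (3 * (3^k * (k.factorial:ℝ))) := by
        have : (3:ℝ) * (k:ℝ)^k ≤ 3 * (3^k * (k.factorial:ℝ)) := by
          exact mul_le_mul_of_nonneg_left ih (by norm_num)
        exact mul_le_mul_of_nonneg_left this (by positivity)
    _ = 3^(k+1) * (((k:ℝ)+1) * (k.factorial:ℝ)) := by ring
    _ = 3^(k+1) * ((k+1).factorial : ℝ) := by rw [Nat.factorial_succ]; push_cast; ring

lemma aux_choose_le (a b : ℕ) (hb : 1 ≤ b) : (a.choose b : ℝ) ≤ (3*a/b)^b := by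
  have hb0 : (0:ℝ) < b := by exact_mod_cast hb
  have hd : (a.choose b : ℝ) * (b:ℝ)^b ≤ (3*(a:ℝ))^b := by
    have h1 : (a.choose b : ℝ) * (b:ℝ)^b ≤ (a.choose b : ℝ) * (3^b * (b.factorial:ℝ)) :=
      mul_le_mul_of_nonneg_left (aux_pow3 b) (by positivity)
    have h2 : (b.factorial * a.choose b : ℕ) ≤ a^b := by
      rw [← Nat.descFactorial_eq_factorial_mul_choose]
      exact Nat.descFactorial_le_pow a b
    have h2' : (b.factorial:ℝ) * (a.choose b:ℝ) ≤ (a:ℝ)^b := by exact_mod_cast h2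
    calc (a.choose b : ℝ) * (b:ℝ)^b ≤ (a.choose b : ℝ) * (3^b * (b.factorial:ℝ)) := h1
    _ = 3^b * ((b.factorial:ℝ) * (a.choose b:ℝ)) := by ring
    _ ≤ 3^b * (a:ℝ)^b := mul_le_mul_of_nonneg_left h2' (by positivity)
    _ = (3*(a:ℝ))^b := by rw [mul_pow]
  rw [div_pow, le_div_iff₀ (by positivity)]
  exact hd

lemma aux_ratio : ∀ (t M m : ℕ), t ≤ m → m ≤ M →
    (M-t).choose (m-t) * M^t ≤ M.choose m * m^t := by
  intro t
  induction t with
  | zero => intro M m _ _; simp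
  | succ t ih =>
    intro M m htm hmM
    have ht : t ≤ m := Nat.le_of_succ_le htm
    have htm' : t < m := htm
    have htM : t < M := lt_of_lt_of_le htm' hmM
    have key : (M-(t+1)).choose (m-(t+1)) * M ≤ (M-t).choose (m-t) * m := by
      have e1 : M - (t+1) + 1 = M - t := by omega
      have e2 : m - (t+1) + 1 = m - t := by omega
      have h := Nat.add_one_mul_choose_eq (M-(t+1)) (m-(t+1))
      -- (M-(t+1)).succ * choose (M-(t+1)) (m-(t+1)) = choose (M-t) (m-t) * (m-t)
      rw [e1, e2] at h
      -- h : (M-t) * (M-(t+1)).choose (m-(t+1)) = (M-t).choose (m-t) * (m-t)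
      have hMt : 0 < M - t := by omega
      apply Nat.le_of_mul_le_mul_right _ hMt
      calc (M-(t+1)).choose (m-(t+1)) * M * (M-t)
          = ((M-t) * (M-(t+1)).choose (m-(t+1))) * M := by ring
        _ = ((M-t).choose (m-t) * (m-t)) * M := by rw [h]
        _ = (M-t).choose (m-t) * ((m-t) * M) := by ring
        _ ≤ (M-t).choose (m-t) * (m * (M-t)) := by
            apply Nat.mul_le_mul_left
            have : m * t ≤ t * M := by
              calc m * t = t * m := by ring
              _ ≤ t * M := Nat.mul_le_mul_left t hmM
            calc (m-t) * M = m*M - t*M := by rw [Nat.sub_mul]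
            _ ≤ m*M - m*t := by omega
            _ = m * (M-t) := (Nat.mul_sub m M t).symm
        _ = (M-t).choose (m-t) * m * (M-t) := by ring
    calc (M-(t+1)).choose (m-(t+1)) * M^(t+1)
        = ((M-(t+1)).choose (m-(t+1)) * M) * M^t := by ring
      _ ≤ ((M-t).choose (m-t) * m) * M^t := Nat.mul_le_mul_right _ key
      _ = ((M-t).choose (m-t) * M^t) * m := by ring
      _ ≤ (M.choose m * m^t) * m := Nat.mul_le_mul_right _ (ih M m ht hmM)
      _ = M.choose m * m^(t+1) := by ring

lemma aux_count {α : Type*} [DecidableEq α] (K T : Finset α) (m : ℕ) (hTK : T ⊆ K) :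
    ((K.powersetCard m).filter (fun E => T ⊆ E)).card ≤ (K.card - T.card).choose (m - T.card) := by
  have hcd : ((K \ T).powersetCard (m - T.card)).card = (K.card - T.card).choose (m - T.card) := by
    rw [card_powersetCard, card_sdiff_of_subset hTK]
  rw [← hcd]
  apply card_le_card_of_injOn (fun E => E \ T)
  · intro E hE
    simp only [mem_coe, mem_filter, mem_powersetCard] at hE
    obtain ⟨⟨hEK, hEc⟩, hTE⟩ := hE
    rw [mem_coe, mem_powersetCard]
    exact ⟨sdiff_subset_sdiff hEK (le_refl T), by rw [card_sdiff_of_subset hTE, hEc]⟩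
  · intro E1 h1 E2 h2 h
    simp only [coe_filter, Set.mem_setOf_eq, mem_powersetCard] at h1 h2
    have := congrArg (· ∪ T) h
    simpa [sdiff_union_of_subset h1.2, sdiff_union_of_subset h2.2] using this

lemma aux_geom : ∀ K : ℕ, ∑ k ∈ Icc 1 K, ((2:ℝ)⁻¹)^k ≤ 1 - (2⁻¹)^K := by
  intro K
  induction K with
  | zero => simp
  | succ K ih =>
    rw [Finset.sum_Icc_succ_top (by omega)]
    have : ((2:ℝ)⁻¹)^(K+1) = (2⁻¹)^K / 2 := by ring
    rw [this]
    linarith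

lemma aux_hc12 {s : ℝ} (hs : 2 < s) : (12:ℝ) ^ (-((s+2)/(s-2))) ≤ 1/12 := by
  have hs2 : (0:ℝ) < s - 2 := by linarith
  have h1 : (1:ℝ) ≤ (s+2)/(s-2) := by
    rw [le_div_iff₀ hs2]; linarith
  calc (12:ℝ) ^ (-((s+2)/(s-2))) ≤ (12:ℝ) ^ (-1:ℝ) :=
        Real.rpow_le_rpow_of_exponent_le (by norm_num) (by linarith)
  _ = 1/12 := by
      rw [Real.rpow_neg (by norm_num), Real.rpow_one]; norm_num

set_option maxHeartbeats 1000000 in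
lemma aux_main_bound
    (s d : ℝ) (hs : 2 < s) (hd : s ≤ d)
    (n : ℕ) (hn2 : (2:ℝ) ≤ n)
    (c : ℝ) (hc_def : c = (12:ℝ) ^ (-((s+2)/(s-2))))
    (m M : ℕ) (hmub : (m:ℝ) ≤ d * n) (hMq : (n:ℝ)^2/4 ≤ (M:ℝ)) (hmM : m ≤ M)
    (k : ℕ) (hk1 : 1 ≤ k) (hkB : (k:ℝ) ≤ c * n * d ^ (-(s/(s-2))))
    (tk : ℕ) (htm : tk ≤ m) (htk_lb : s * k / 2 ≤ (tk:ℝ)) :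
    (n.choose k : ℝ) * (((k+1).choose 2).choose tk : ℝ) * ((M - tk).choose (m - tk) : ℝ)
      ≤ (2⁻¹)^k * (M.choose m : ℝ) := by
  have hs2 : (0:ℝ) < s - 2 := by linarith
  have hs2' : s - 2 ≠ 0 := ne_of_gt hs2
  have hd2 : (2:ℝ) < d := lt_of_lt_of_le hs hd
  have hd0 : (0:ℝ) < d := by linarith
  have hd1 : (1:ℝ) ≤ d := by linarith
  have hn0 : (0:ℝ) < n := by linarith
  have hk0 : (0:ℝ) < k := by exact_mod_cast hk1
  have hc0 : (0:ℝ) < c := hc_def ▸ Real.rpow_pos_of_pos (by norm_num) _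
  have hc12 : c ≤ 1/12 := hc_def ▸ aux_hc12 hs
  have hM0 : (0:ℝ) < M := lt_of_lt_of_le (by positivity) hMq
  have hkt : (k:ℝ) ≤ (tk:ℝ) := by nlinarith
  have htk1 : 1 ≤ tk := by
    have h : (1:ℝ) ≤ (k:ℝ) := by exact_mod_cast hk1
    have : (1:ℝ) ≤ (tk:ℝ) := by linarith
    exact_mod_cast this
  have ht0 : (0:ℝ) < tk := by
    have : (1:ℝ) ≤ (tk:ℝ) := by exact_mod_cast htk1
    linarith
  have h1 : (n.choose k : ℝ) ≤ (3*n/k)^k := aux_choose_le n k hk1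
  have hkk : (k:ℝ)*(k:ℝ) ≤ (k:ℝ)*tk := mul_le_mul_of_nonneg_left hkt hk0.le
  have h2 : ((((k+1).choose 2).choose tk : ℕ) : ℝ) ≤ (3*k)^tk := by
    refine le_trans (aux_choose_le _ tk htk1) ?_
    apply pow_le_pow_left₀ (by positivity)
    rw [div_le_iff₀ ht0]
    have hk1R : (1:ℝ) ≤ (k:ℝ) := by exact_mod_cast hk1
    have hkk2 : (k:ℝ) ≤ (k:ℝ)*(k:ℝ) := by nlinarith
    have hq : (((k+1).choose 2 : ℕ) : ℝ) ≤ (k:ℝ) * tk := by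
      rw [Nat.cast_choose_two]
      push_cast
      nlinarith [hkk, hkk2]
    nlinarith [hq, ht0]
  have h3 : (((M - tk).choose (m - tk) : ℕ) : ℝ) ≤ (M.choose m : ℝ) * ((m:ℝ)/M)^tk := by
    have hcr : (((M - tk).choose (m - tk)):ℝ) * (M:ℝ)^tk ≤ (M.choose m : ℝ) * (m:ℝ)^tk := by
      exact_mod_cast aux_ratio tk M m htm hmM
    rw [div_pow, ← mul_div_assoc, le_div_iff₀ (by positivity : (0:ℝ) < (M:ℝ)^tk)]
    exact hcr
  have hmM4 : (m:ℝ)/M ≤ 4*d/n := by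
    rw [div_le_div_iff₀ hM0 hn0]
    have f1 : (m:ℝ)*n ≤ d*n*n := mul_le_mul_of_nonneg_right hmub hn0.le
    have f2 : 4*d*((n:ℝ)^2/4) ≤ 4*d*M :=
      mul_le_mul_of_nonneg_left hMq (by positivity)
    nlinarith [f1, f2]
  have h4 : ((m:ℝ)/M)^tk ≤ (4*d/n)^tk :=
    pow_le_pow_left₀ (by positivity) hmM4 tk
  set b : ℝ := 12*k*d/n with hb_def
  have hb0 : (0:ℝ) < b := by positivity
  have hkn : (k:ℝ)/n ≤ c * d ^ (-(s/(s-2))) := by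
    rw [div_le_iff₀ hn0]
    calc (k:ℝ) ≤ c * n * d ^ (-(s/(s-2))) := hkB
    _ = c * d ^ (-(s/(s-2))) * n := by ring
  have hda : d * d ^ (-(s/(s-2))) ≤ 1 := by
    have he : d * d ^ (-(s/(s-2))) = d ^ ((1:ℝ) + -(s/(s-2))) := by
      rw [Real.rpow_add hd0, Real.rpow_one]
    rw [he]
    apply Real.rpow_le_one_of_one_le_of_nonpos hd1
    have h1' : (1:ℝ) ≤ s/(s-2) := by rw [le_div_iff₀ hs2]; linarith
    linarith
  have hb1 : b ≤ 1 := by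
    calc b = 12 * ((k:ℝ)/n) * d := by rw [hb_def]; ring
    _ ≤ 12 * (c * d ^ (-(s/(s-2)))) * d :=
        mul_le_mul_of_nonneg_right (mul_le_mul_of_nonneg_left hkn (by norm_num)) hd0.le
    _ = 12 * c * (d * d ^ (-(s/(s-2)))) := by ring
    _ ≤ 12 * c * 1 := mul_le_mul_of_nonneg_left hda (by positivity)
    _ ≤ 1 := by nlinarith
  have h5 : b^tk ≤ b ^ ((s*k/2 : ℝ)) := by
    rw [← Real.rpow_natCast b tk]
    exact Real.rpow_le_rpow_of_exponent_ge hb0 hb1 htk_lb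
  have h6 : b ^ ((s*k/2:ℝ)) = (b ^ ((s/2):ℝ))^k := by
    rw [← Real.rpow_natCast (b ^ ((s/2):ℝ)) k, ← Real.rpow_mul hb0.le]
    congr 1
    ring
  have hkn0 : (0:ℝ) < (k:ℝ)/n := by positivity
  have hcore : 3*(n:ℝ)/k * b ^ ((s/2):ℝ) ≤ 1/2 := by
    have e1 : b = (12*d) * ((k:ℝ)/n) := by rw [hb_def]; ring
    have e2 : b ^ ((s/2):ℝ) = (12*d) ^ ((s/2):ℝ) * ((k:ℝ)/n) ^ ((s/2):ℝ) := by
      rw [e1, Real.mul_rpow (by positivity) hkn0.le]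
    have e3 : ((k:ℝ)/n) ^ ((s/2):ℝ) = ((k:ℝ)/n) * ((k:ℝ)/n) ^ (s/2 - 1) := by
      nth_rewrite 1 [show (s/2:ℝ) = 1 + (s/2-1) by ring]
      rw [Real.rpow_add hkn0, Real.rpow_one]
    have e4 : 3*(n:ℝ)/k * b ^ ((s/2):ℝ) = 3 * (12*d) ^ ((s/2):ℝ) * ((k:ℝ)/n) ^ (s/2-1) := by
      rw [e2, e3]
      field_simp
    have h7 : ((k:ℝ)/n) ^ (s/2-1) ≤ (c * d ^ (-(s/(s-2)))) ^ (s/2-1) :=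
      Real.rpow_le_rpow hkn0.le hkn (by linarith)
    have e5 : (c * d ^ (-(s/(s-2)))) ^ (s/2-1) = c ^ (s/2-1) * d ^ (-(s/2)) := by
      rw [Real.mul_rpow hc0.le (Real.rpow_nonneg hd0.le _), ← Real.rpow_mul hd0.le,
        show -(s/(s-2))*(s/2-1) = -(s/2) by field_simp]
    have e6 : (12*d) ^ ((s/2):ℝ) = (12:ℝ) ^ ((s/2):ℝ) * d ^ ((s/2):ℝ) :=
      Real.mul_rpow (by norm_num) hd0.le
    have e7 : d ^ ((s/2):ℝ) * d ^ (-(s/2)) = 1 := by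
      rw [← Real.rpow_add hd0, show s/2 + -(s/2) = 0 by ring, Real.rpow_zero]
    have e8 : c ^ ((s/2-1):ℝ) = (12:ℝ) ^ (-((s+2)/2)) := by
      rw [hc_def, ← Real.rpow_mul (by norm_num : (0:ℝ) ≤ 12),
        show (-((s + 2) / (s - 2)))*(s/2-1) = -((s+2)/2) by field_simp]
    have e9 : (12:ℝ) ^ ((s/2):ℝ) * (12:ℝ) ^ (-((s+2)/2)) = (12:ℝ)⁻¹ := by
      rw [← Real.rpow_add (by norm_num : (0:ℝ) < 12),
        show s/2 + -((s+2)/2) = -1 by ring,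
        Real.rpow_neg (by norm_num), Real.rpow_one]
    calc 3*(n:ℝ)/k * b ^ ((s/2):ℝ) = 3 * (12*d) ^ ((s/2):ℝ) * ((k:ℝ)/n) ^ (s/2-1) := e4
    _ ≤ 3 * (12*d) ^ ((s/2):ℝ) * (c * d ^ (-(s/(s-2)))) ^ (s/2-1) :=
        mul_le_mul_of_nonneg_left h7 (by positivity)
    _ = 3 * ((12:ℝ) ^ ((s/2):ℝ) * (12:ℝ) ^ (-((s+2)/2))) * (d ^ ((s/2):ℝ) * d ^ (-(s/2))) := by
        rw [e5, e6, e8]; ring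
    _ = 3 * (12:ℝ)⁻¹ * 1 := by rw [e7, e9]
    _ ≤ 1/2 := by norm_num
  have hb34 : (3*(k:ℝ))*(4*d/n) = b := by rw [hb_def]; ring
  calc (n.choose k : ℝ) * (((k+1).choose 2).choose tk : ℝ) * ((M - tk).choose (m - tk) : ℝ)
      ≤ (3*n/k)^k * (3*k)^tk * ((M.choose m : ℝ) * ((m:ℝ)/M)^tk) :=
        mul_le_mul (mul_le_mul h1 h2 (by positivity) (by positivity)) h3
          (by positivity) (by positivity)
    _ = (M.choose m : ℝ) * ((3*n/k)^k * ((3*k)^tk * ((m:ℝ)/M)^tk)) := by ring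
    _ ≤ (M.choose m : ℝ) * ((3*n/k)^k * ((3*k)^tk * (4*d/n)^tk)) := by
        apply mul_le_mul_of_nonneg_left _ (by positivity)
        apply mul_le_mul_of_nonneg_left _ (by positivity)
        exact mul_le_mul_of_nonneg_left h4 (by positivity)
    _ = (M.choose m : ℝ) * ((3*n/k)^k * b^tk) := by
        rw [← mul_pow, hb34]
    _ ≤ (M.choose m : ℝ) * ((3*n/k)^k * (b ^ ((s/2):ℝ))^k) := by
        apply mul_le_mul_of_nonneg_left _ (by positivity)
        apply mul_le_mul_of_nonneg_left _ (by positivity)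
        calc b^tk ≤ b ^ ((s*k/2:ℝ)) := h5
        _ = (b ^ ((s/2):ℝ))^k := h6
    _ = (M.choose m : ℝ) * (3*(n:ℝ)/k * b ^ ((s/2):ℝ))^k := by rw [mul_pow]
    _ ≤ (M.choose m : ℝ) * (1/2)^k :=
        mul_le_mul_of_nonneg_left (pow_le_pow_left₀ (by positivity) hcore k) (by positivity)
    _ = (2⁻¹)^k * (M.choose m : ℝ) := by
        rw [one_div]; ring

set_option maxHeartbeats 2000000 in
/-- Lower bound construction: for every `s > 2` there is `c_s > 0` such that for all
`s ≤ d ≤ (n-1)/2` (with `n` large), some `n`-vertex graph with average degree at least `d`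
has no subgraph with at most `c_s·n·d^{-s/(s-2)}` vertices and average degree at least `s`. -/
theorem stmt_6 (s : ℝ) (hs : 2 < s) :
    ∃ c : ℝ, 0 < c ∧ ∃ N : ℕ, ∀ n : ℕ, N ≤ n → ∀ d : ℝ, s ≤ d → d ≤ ((n : ℝ) - 1) / 2 →
      ∃ G : SimpleGraph (Fin n),
        d * (n : ℝ) ≤ 2 * (Nat.card G.edgeSet : ℝ) ∧
        ∀ R : Finset (Fin n), R.Nonempty →
          (R.card : ℝ) ≤ c * (n : ℝ) * d ^ (-(s / (s - 2))) →
          2 * (Nat.card (G.induce (↑R : Set (Fin n))).edgeSet : ℝ) < s * (R.card : ℝ) := by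
  classical
  have hs2 : (0:ℝ) < s - 2 := by linarith
  refine ⟨(12:ℝ) ^ (-((s+2)/(s-2))), Real.rpow_pos_of_pos (by norm_num) _, 2, ?_⟩
  set c : ℝ := (12:ℝ) ^ (-((s+2)/(s-2))) with hc_def
  intro n hn d hd hdn
  have hc0 : (0:ℝ) < c := Real.rpow_pos_of_pos (by norm_num) _
  have hd2 : (2:ℝ) < d := lt_of_lt_of_le hs hd
  have hd0 : (0:ℝ) < d := by linarith
  have hn2 : (2:ℝ) ≤ n := by exact_mod_cast hn
  have hn0 : (0:ℝ) < n := by linarith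
  -- setup
  set K : Finset (Sym2 (Fin n)) := (⊤ : SimpleGraph (Fin n)).edgeFinset with hK_def
  set M : ℕ := K.card with hM_def
  have hM2 : M = n.choose 2 := by
    rw [hM_def, hK_def, SimpleGraph.card_edgeFinset_top_eq_card_choose_two, Fintype.card_fin]
  have hMR : (M:ℝ) = n*((n:ℝ)-1)/2 := by rw [hM2, Nat.cast_choose_two]
  set m : ℕ := ⌈d * n / 2⌉₊ with hm_def
  have hmlb : d*n/2 ≤ (m:ℝ) := Nat.le_ceil _
  have hdn4 : (4:ℝ) ≤ d * n := by nlinarith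
  have hmub : (m:ℝ) ≤ d*n := by
    have h1 : (m:ℝ) < d*n/2 + 1 := Nat.ceil_lt_add_one (by positivity)
    linarith
  have hMq : (n:ℝ)^2/4 ≤ (M:ℝ) := by rw [hMR]; nlinarith
  have hmM : m ≤ M := by
    rw [hm_def]
    apply Nat.ceil_le.mpr
    rw [hMR]
    nlinarith
  set B : ℝ := c * n * d ^ (-(s/(s-2))) with hB_def
  have hB0 : (0:ℝ) ≤ B := by positivity
  set t : ℕ → ℕ := fun k => ⌈s * k / 2⌉₊ with ht_def
  set Kmax : ℕ := ⌊B⌋₊ with hKmax_def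
  set bnd : ℕ → ℕ := fun k => if t k ≤ m then (M - t k).choose (m - t k) else 0 with hbnd_def
  set A : ℕ → ℕ := fun k => n.choose k * (((k+1).choose 2).choose (t k)) * bnd k with hA_def
  -- Key existence of a good edge set
  have hexists : ∃ E ∈ K.powersetCard m, ∀ R : Finset (Fin n), R.Nonempty → (R.card:ℝ) ≤ B →
      ∀ T ∈ R.sym2.powersetCard (t R.card), ¬ (T ⊆ E) := by
    by_contra hcon
    push_neg at hcon
    -- every E is bad; count
    have hsub : K.powersetCard m ⊆ (Icc 1 Kmax).biUnion (fun k =>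
        ((univ : Finset (Fin n)).powersetCard k).biUnion (fun R =>
          (R.sym2.powersetCard (t k)).biUnion (fun T =>
            (K.powersetCard m).filter (fun E => T ⊆ E)))) := by
      intro E hE
      obtain ⟨R, hRne, hRle, T, hT, hTE⟩ := hcon E hE
      refine mem_biUnion.mpr ⟨R.card, ?_, mem_biUnion.mpr ⟨R, ?_, mem_biUnion.mpr
        ⟨T, hT, mem_filter.mpr ⟨hE, hTE⟩⟩⟩⟩
      · rw [mem_Icc]
        exact ⟨card_pos.mpr hRne, Nat.le_floor hRle⟩
      · exact mem_powersetCard.mpr ⟨subset_univ R, rfl⟩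
    have hcount : (M.choose m : ℕ) ≤ ∑ k ∈ Icc 1 Kmax, A k := by
      have h0 : (K.powersetCard m).card = M.choose m := by
        rw [card_powersetCard]
      calc (M.choose m : ℕ) = (K.powersetCard m).card := h0.symm
      _ ≤ _ := card_le_card hsub
      _ ≤ ∑ k ∈ Icc 1 Kmax, (((univ : Finset (Fin n)).powersetCard k).biUnion (fun R =>
            (R.sym2.powersetCard (t k)).biUnion (fun T =>
              (K.powersetCard m).filter (fun E => T ⊆ E)))).card := card_biUnion_le
      _ ≤ ∑ k ∈ Icc 1 Kmax, A k := by
          apply sum_le_sum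
          intro k _
          calc (((univ : Finset (Fin n)).powersetCard k).biUnion (fun R =>
                (R.sym2.powersetCard (t k)).biUnion (fun T =>
                  (K.powersetCard m).filter (fun E => T ⊆ E)))).card
              ≤ ∑ R ∈ (univ : Finset (Fin n)).powersetCard k,
                  ((R.sym2.powersetCard (t k)).biUnion (fun T =>
                    (K.powersetCard m).filter (fun E => T ⊆ E))).card := card_biUnion_le
            _ ≤ ∑ _R ∈ (univ : Finset (Fin n)).powersetCard k,
                  (((k+1).choose 2).choose (t k)) * bnd k := by
                apply sum_le_sum
                intro R hR
                have hRcard : R.card = k := (mem_powersetCard.mp hR).2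
                calc ((R.sym2.powersetCard (t k)).biUnion (fun T =>
                      (K.powersetCard m).filter (fun E => T ⊆ E))).card
                    ≤ ∑ T ∈ R.sym2.powersetCard (t k),
                        ((K.powersetCard m).filter (fun E => T ⊆ E)).card := card_biUnion_le
                  _ ≤ ∑ _T ∈ R.sym2.powersetCard (t k), bnd k := by
                      apply sum_le_sum
                      intro T hT
                      have hTcard : T.card = t k := (mem_powersetCard.mp hT).2
                      by_cases h1 : T ⊆ K ∧ t k ≤ m
                      · rw [hbnd_def]
                        simp only [if_pos h1.2]
                        have := aux_count K T m h1.1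
                        rwa [hTcard] at this
                      · have hemp : ((K.powersetCard m).filter (fun E => T ⊆ E)) = ∅ := by
                          apply eq_empty_of_forall_notMem
                          intro E hE
                          rw [mem_filter, mem_powersetCard] at hE
                          obtain ⟨⟨hEK, hEc⟩, hTE⟩ := hE
                          apply h1
                          constructor
                          · exact hTE.trans hEK
                          · rw [← hTcard, ← hEc]
                            exact card_le_card hTE
                        rw [hemp]
                        simp
                  _ = (((k+1).choose 2).choose (t k)) * bnd k := by
                      rw [sum_const, card_powersetCard, card_sym2, hRcard, smul_eq_mul]
            _ = A k := by
                rw [sum_const, card_powersetCard, card_univ, Fintype.card_fin, smul_eq_mul]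
                simp only [hA_def]
                ring
    -- real-side strict inequality
    have hM0 : (0:ℝ) < M := lt_of_lt_of_le (by positivity) hMq
    have hchoose0 : (0:ℝ) < (M.choose m : ℝ) := by
      exact_mod_cast Nat.choose_pos hmM
    have hreal : (∑ k ∈ Icc 1 Kmax, (A k : ℝ)) < (M.choose m : ℝ) := by
      have hterm : ∀ k ∈ Icc 1 Kmax, (A k : ℝ) ≤ (2⁻¹)^k * (M.choose m : ℝ) := by
        intro k hk
        rw [mem_Icc] at hk
        obtain ⟨hk1, hk2⟩ := hk
        by_cases htm : t k ≤ m
        · have hkB : (k:ℝ) ≤ B := le_trans (Nat.cast_le.mpr hk2) (Nat.floor_le hB0)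
          have htk_lb : s * k / 2 ≤ ((t k : ℕ):ℝ) := Nat.le_ceil _
          have hbd := aux_main_bound s d hs hd n hn2 c hc_def m M hmub hMq hmM k hk1 hkB
            (t k) htm htk_lb
          calc (A k : ℝ) = (n.choose k : ℝ) * (((k+1).choose 2).choose (t k) : ℝ) *
              ((M - t k).choose (m - t k) : ℝ) := by
                simp only [hA_def, hbnd_def, if_pos htm]
                push_cast
                ring
          _ ≤ (2⁻¹)^k * (M.choose m : ℝ) := hbd
        · simp only [hA_def, hbnd_def, if_neg htm, mul_zero, Nat.cast_zero]
          positivity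
      calc (∑ k ∈ Icc 1 Kmax, (A k : ℝ)) ≤ ∑ k ∈ Icc 1 Kmax, (2⁻¹:ℝ)^k * (M.choose m : ℝ) :=
            sum_le_sum hterm
      _ = (∑ k ∈ Icc 1 Kmax, (2⁻¹:ℝ)^k) * (M.choose m : ℝ) := by rw [← sum_mul]
      _ ≤ (1 - (2⁻¹)^Kmax) * (M.choose m : ℝ) :=
            mul_le_mul_of_nonneg_right (aux_geom Kmax) hchoose0.le
      _ < 1 * (M.choose m : ℝ) := by
            apply mul_lt_mul_of_pos_right _ hchoose0
            have : (0:ℝ) < (2⁻¹)^Kmax := by positivity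
            linarith
      _ = (M.choose m : ℝ) := one_mul _
    have : (M.choose m : ℝ) ≤ ∑ k ∈ Icc 1 Kmax, (A k : ℝ) := by
      exact_mod_cast hcount
    linarith
  -- construct the graph
  obtain ⟨E, hE, hEgood⟩ := hexists
  rw [mem_powersetCard] at hE
  obtain ⟨hEK, hEcard⟩ := hE
  have hEnd : ∀ e ∈ E, ¬ e.IsDiag := by
    intro e he
    have h := hEK he
    rw [hK_def, SimpleGraph.mem_edgeFinset] at h
    exact SimpleGraph.not_isDiag_of_mem_edgeSet _ h
  set G : SimpleGraph (Fin n) := SimpleGraph.fromEdgeSet (↑E : Set (Sym2 (Fin n))) with hG_def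
  have hGE : G.edgeSet = (↑E : Set (Sym2 (Fin n))) := by
    rw [hG_def, SimpleGraph.edgeSet_fromEdgeSet]
    ext e
    simp only [Set.mem_diff, Set.mem_setOf_eq, mem_coe, and_iff_left_iff_imp]
    intro he
    exact hEnd e he
  have hGcard : Nat.card G.edgeSet = m := by
    rw [hGE, Nat.card_coe_set_eq, Set.ncard_coe_finset, hEcard]
  refine ⟨G, ?_, ?_⟩
  · rw [hGcard]
    linarith
  · intro R hRne hRle
    by_contra hcon
    push_neg at hcon
    set eR : ℕ := Nat.card (G.induce (↑R : Set (Fin n))).edgeSet with heR_def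
    have hinj : Function.Injective (Sym2.map (Subtype.val : (↑R : Set (Fin n)) → Fin n)) :=
      Sym2.map.injective Subtype.val_injective
    set S : Set (Sym2 (Fin n)) :=
      Sym2.map (Subtype.val : (↑R : Set (Fin n)) → Fin n) '' (G.induce (↑R : Set (Fin n))).edgeSet
      with hS_def
    have hScard : Nat.card S = eR := by
      rw [hS_def, Nat.card_image_of_injective hinj]
    have hSE : S ⊆ (↑E : Set (Sym2 (Fin n))) := by
      rintro x ⟨e, he, rfl⟩
      induction e using Sym2.ind with
      | _ a b =>
        rw [Sym2.map_pair_eq]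
        have hadj : G.Adj ↑a ↑b := he
        have : s(((a : (↑R : Set (Fin n))) : Fin n), ((b : (↑R : Set (Fin n))) : Fin n)) ∈
            G.edgeSet := hadj
        rwa [hGE] at this
    have hSR : S ⊆ (↑(R.sym2) : Set (Sym2 (Fin n))) := by
      rintro x ⟨e, _, rfl⟩
      induction e using Sym2.ind with
      | _ a b =>
        rw [Sym2.map_pair_eq, mem_coe, mem_sym2_iff]
        intro y hy
        rw [Sym2.mem_iff] at hy
        rcases hy with rfl | rfl
        · exact a.2
        · exact b.2
    have hSfin : S.Finite := E.finite_toSet.subset hSE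
    have hFcard : hSfin.toFinset.card = eR := by
      rw [← hScard, Nat.card_coe_set_eq, Set.ncard_eq_toFinset_card S hSfin]
    have htle : t R.card ≤ eR := by
      have h' : s * (R.card:ℝ) / 2 ≤ (eR:ℝ) := by linarith
      simp only [ht_def]
      exact Nat.ceil_le.mpr h'
    obtain ⟨T, hTsub, hTcard⟩ :=
      Finset.exists_subset_card_eq (show t R.card ≤ hSfin.toFinset.card by rw [hFcard]; exact htle)
    refine hEgood R hRne hRle T ?_ (fun x hx => ?_)
    · rw [mem_powersetCard]
      refine ⟨fun x hx => ?_, hTcard⟩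
      have := hTsub hx
      rw [Set.Finite.mem_toFinset] at this
      exact hSR this
    · have := hTsub hx
      rw [Set.Finite.mem_toFinset] at this
      exact hSE this
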